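/- Let X and Y be subspaces of V with X ≠ {0}, Y ≠ {0}, X ≠ V and Y ≠ V. Then ∠_M(X, Y) = ∠_M(Y^⊥, X^⊥), where ⊥ denotes orthogonal complement. -/

import Mathlib

open scoped RealInnerProductSpace

/-- The angle `∠(x,y) = arccos(|⟨x,y⟩|/(‖x‖‖y‖)) ∈ [0,π/2]` between two vectors. -/
noncomputable def ang {V : Type*} [NormedAddCommGroup V] [InnerProductSpace ℝ V]
    (x y : V) : ℝ :=
  Real.arccos (|(inner ℝ x y : ℝ)| / (‖x‖ * ‖y‖))

/-- The angle `∠_M(X,y) = inf{∠(x,y) : 0 ≠ x ∈ X}` between a subspace and a vector. -/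
noncomputable def angMv {V : Type*} [NormedAddCommGroup V] [InnerProductSpace ℝ V]
    (X : Submodule ℝ V) (y : V) : ℝ :=
  sInf ((fun x => ang x y) '' {x : V | x ∈ X ∧ x ≠ 0})

/-- The maximal angle `∠_M(X,Y) = sup{∠_M(X,y) : 0 ≠ y ∈ Y}` between two subspaces. -/
noncomputable def angMM {V : Type*} [NormedAddCommGroup V] [InnerProductSpace ℝ V]
    (X Y : Submodule ℝ V) : ℝ :=
  sSup ((fun y => angMv X y) '' {y : V | y ∈ Y ∧ y ≠ 0})

lemma arccos_anti {a b : ℝ} (h : a ≤ b) : Real.arccos b ≤ Real.arccos a := by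
  simp only [Real.arccos]
  exact sub_le_sub_left (Real.monotone_arcsin h) _

section Aux

variable {V : Type*} [NormedAddCommGroup V] [InnerProductSpace ℝ V] [FiniteDimensional ℝ V]

lemma inner_proj_left (X : Submodule ℝ V) (x : V) (hx : x ∈ X) (y : V) :
    ⟪x, y⟫ = ⟪x, ((Submodule.orthogonalProjectionOnto X y : V))⟫ := by
  have h := Submodule.inner_orthogonalProjectionOnto_eq_of_mem_left (K := X) (⟨x, hx⟩ : X) y
  rw [Submodule.coe_inner] at h
  exact h.symm

lemma inner_proj_self (X : Submodule ℝ V) (y : V) :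
    ⟪((Submodule.orthogonalProjectionOnto X y : V)), y⟫
      = ‖(Submodule.orthogonalProjectionOnto X y : V)‖ ^ 2 := by
  rw [inner_proj_left X _ (Submodule.coe_mem _) y, real_inner_self_eq_norm_sq]

lemma angMv_eq (X : Submodule ℝ V) (hX : X ≠ ⊥) (y : V) (hy : y ≠ 0) :
    angMv X y = Real.arccos (‖(Submodule.orthogonalProjectionOnto X y : V)‖ / ‖y‖) := by
  have hyn : (0:ℝ) < ‖y‖ := norm_pos_iff.2 hy
  apply IsLeast.csInf_eq
  constructor
  · -- membership
    by_cases h : (Submodule.orthogonalProjectionOnto X y : V) = 0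
    · obtain ⟨x₀, hx₀X, hx₀⟩ := Submodule.exists_mem_ne_zero_of_ne_bot hX
      refine ⟨x₀, ⟨hx₀X, hx₀⟩, ?_⟩
      have h0 : ⟪x₀, y⟫ = 0 := by
        rw [inner_proj_left X x₀ hx₀X y, h, inner_zero_right]
      show ang x₀ y = _
      rw [ang, h0, h]
      simp
    · refine ⟨(Submodule.orthogonalProjectionOnto X y : V), ⟨Submodule.coe_mem _, h⟩, ?_⟩
      have hp : (0:ℝ) < ‖(Submodule.orthogonalProjectionOnto X y : V)‖ := norm_pos_iff.2 h
      show ang _ y = _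
      rw [ang, inner_proj_self X y, abs_of_nonneg (sq_nonneg _), sq,
        mul_div_mul_left _ _ hp.ne']
  · rintro a ⟨x, ⟨hxX, hx0⟩, rfl⟩
    show Real.arccos _ ≤ ang x y
    apply arccos_anti
    have hxn : (0:ℝ) < ‖x‖ := norm_pos_iff.2 hx0
    have hcs : |⟪x, y⟫| ≤ ‖x‖ * ‖(Submodule.orthogonalProjectionOnto X y : V)‖ := by
      rw [inner_proj_left X x hxX y]
      exact abs_real_inner_le_norm _ _
    rw [div_le_div_iff₀ (by positivity) hyn]
    nlinarith [abs_nonneg ⟪x, y⟫]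

lemma angMM_eq (X Y : Submodule ℝ V) (hX : X ≠ ⊥) (y₀ : V) (hy₀Y : y₀ ∈ Y)
    (hn : ‖y₀‖ = 1)
    (hmin : ∀ y, y ∈ Y → ‖y‖ = 1 →
      ‖(Submodule.orthogonalProjectionOnto X y₀ : V)‖ ≤ ‖(Submodule.orthogonalProjectionOnto X y : V)‖) :
    angMM X Y = Real.arccos ‖(Submodule.orthogonalProjectionOnto X y₀ : V)‖ := by
  have hy₀0 : y₀ ≠ 0 := by intro h; rw [h] at hn; simp at hn
  apply IsGreatest.csSup_eq
  constructor
  · refine ⟨y₀, ⟨hy₀Y, hy₀0⟩, ?_⟩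
    show angMv X y₀ = _
    rw [angMv_eq X hX y₀ hy₀0, hn, div_one]
  · rintro a ⟨y, ⟨hyY, hy0⟩, rfl⟩
    show angMv X y ≤ _
    rw [angMv_eq X hX y hy0]
    apply arccos_anti
    have hyn : (0:ℝ) < ‖y‖ := norm_pos_iff.2 hy0
    have h1 : ‖(‖y‖⁻¹ • y)‖ = 1 := by
      rw [norm_smul, norm_inv, norm_norm, inv_mul_cancel₀ hyn.ne']
    have h2 := hmin (‖y‖⁻¹ • y) (Y.smul_mem _ hyY) h1
    have h3 : (Submodule.orthogonalProjectionOnto X (‖y‖⁻¹ • y) : V)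
        = ‖y‖⁻¹ • (Submodule.orthogonalProjectionOnto X y : V) := by
      rw [map_smul]; rfl
    rw [h3, norm_smul, norm_inv, norm_norm] at h2
    calc ‖(Submodule.orthogonalProjectionOnto X y₀ : V)‖
        ≤ ‖y‖⁻¹ * ‖(Submodule.orthogonalProjectionOnto X y : V)‖ := h2
      _ = ‖(Submodule.orthogonalProjectionOnto X y : V)‖ / ‖y‖ := by rw [div_eq_inv_mul]

lemma exists_min (X Y : Submodule ℝ V) (hY : Y ≠ ⊥) :
    ∃ y₀, y₀ ∈ Y ∧ ‖y₀‖ = 1 ∧ ∀ y, y ∈ Y → ‖y‖ = 1 →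
      ‖(Submodule.orthogonalProjectionOnto X y₀ : V)‖ ≤ ‖(Submodule.orthogonalProjectionOnto X y : V)‖ := by
  set K : Set V := (Y : Set V) ∩ Metric.sphere 0 1 with hK
  have hKmem : ∀ y : V, y ∈ K ↔ y ∈ Y ∧ ‖y‖ = 1 := by
    intro y
    simp [hK, mem_sphere_iff_norm]
  have hKne : K.Nonempty := by
    obtain ⟨x, hxY, hx0⟩ := Submodule.exists_mem_ne_zero_of_ne_bot hY
    have hxn : (0:ℝ) < ‖x‖ := norm_pos_iff.2 hx0
    refine ⟨‖x‖⁻¹ • x, (hKmem _).2 ⟨Y.smul_mem _ hxY, ?_⟩⟩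
    rw [norm_smul, norm_inv, norm_norm, inv_mul_cancel₀ hxn.ne']
  have hKc : IsCompact K := by
    apply Metric.isCompact_of_isClosed_isBounded
    · exact IsClosed.inter (Submodule.closed_of_finiteDimensional Y) Metric.isClosed_sphere
    · exact Bornology.IsBounded.subset (Metric.isBounded_sphere) Set.inter_subset_right
  have hcont : Continuous fun y : V => ‖(Submodule.orthogonalProjectionOnto X y : V)‖ :=
    (X.subtypeL.comp (Submodule.orthogonalProjectionOnto X)).continuous.norm
  obtain ⟨y₀, hy₀K, hy₀min⟩ := hKc.exists_isMinOn hKne hcont.continuousOn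
  obtain ⟨hy₀Y, hy₀n⟩ := (hKmem y₀).1 hy₀K
  exact ⟨y₀, hy₀Y, hy₀n, fun y hyY hyn => hy₀min ((hKmem y).2 ⟨hyY, hyn⟩)⟩

lemma aux_le (A B : Submodule ℝ V) (y₀ : V) (hy₀B : y₀ ∈ B) (hn : ‖y₀‖ = 1) (t : ℝ)
    (ht0 : 0 ≤ t)
    (ht : ∀ u, u ∈ A → ‖u‖ = 1 → ‖(Submodule.orthogonalProjectionOnto B u : V)‖ ≤ t) :
    ‖(Submodule.orthogonalProjectionOnto A y₀ : V)‖ ≤ t := by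
  by_cases h : (Submodule.orthogonalProjectionOnto A y₀ : V) = 0
  · rw [h]; simpa using ht0
  set p : V := (Submodule.orthogonalProjectionOnto A y₀ : V) with hp
  have hpn : (0:ℝ) < ‖p‖ := norm_pos_iff.2 h
  set u : V := ‖p‖⁻¹ • p with hu
  have huA : u ∈ A := A.smul_mem _ (Submodule.coe_mem _)
  have hun : ‖u‖ = 1 := by
    rw [hu, norm_smul, norm_inv, norm_norm, inv_mul_cancel₀ hpn.ne']
  have h1 : ⟪u, y₀⟫ = ‖p‖ := by
    rw [hu, real_inner_smul_left, hp, inner_proj_self A y₀, ← hp, sq, ← mul_assoc,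
      inv_mul_cancel₀ hpn.ne', one_mul]
  have h2 : ⟪u, y₀⟫ = ⟪((Submodule.orthogonalProjectionOnto B u : V)), y₀⟫ := by
    have h := Submodule.inner_orthogonalProjectionOnto_eq_of_mem_right (K := B) (⟨y₀, hy₀B⟩ : B) u
    rw [Submodule.coe_inner] at h
    exact h.symm
  calc ‖p‖ = ⟪((Submodule.orthogonalProjectionOnto B u : V)), y₀⟫ := by rw [← h2, h1]
    _ ≤ ‖(Submodule.orthogonalProjectionOnto B u : V)‖ * ‖y₀‖ := real_inner_le_norm _ _
    _ = ‖(Submodule.orthogonalProjectionOnto B u : V)‖ := by rw [hn, mul_one]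
    _ ≤ t := ht u huA hun

end Aux

theorem stmt7 {V : Type*} [NormedAddCommGroup V] [InnerProductSpace ℝ V]
    [FiniteDimensional ℝ V]
    (X Y : Submodule ℝ V) (hX0 : X ≠ ⊥) (hY0 : Y ≠ ⊥) (hXT : X ≠ ⊤) (hYT : Y ≠ ⊤) :
    angMM X Y = angMM Yᗮ Xᗮ := by
  have hYo : Yᗮ ≠ ⊥ := fun h => hYT (Submodule.orthogonal_eq_bot_iff.1 h)
  have hXo : Xᗮ ≠ ⊥ := fun h => hXT (Submodule.orthogonal_eq_bot_iff.1 h)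
  obtain ⟨y₀, hy₀Y, hy₀n, hy₀min⟩ := exists_min X Y hY0
  obtain ⟨u₀, hu₀X, hu₀n, hu₀min⟩ := exists_min Yᗮ Xᗮ hXo
  rw [angMM_eq X Y hX0 y₀ hy₀Y hy₀n hy₀min,
    angMM_eq Yᗮ Xᗮ hYo u₀ hu₀X hu₀n hu₀min]
  -- Pythagoras on the unit sphere
  have pyth : ∀ (S : Submodule ℝ V) (v : V), ‖v‖ = 1 →
      ‖(Submodule.orthogonalProjectionOnto S v : V)‖ ^ 2 + ‖(Submodule.orthogonalProjectionOnto Sᗮ v : V)‖ ^ 2 = 1 := by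
    intro S v hv
    have := Submodule.norm_sq_eq_add_norm_sq_projection v S
    rw [hv] at this
    simp only [Submodule.norm_coe]
    linarith [this]
  -- max property of y₀ for P_{Xᗮ} on unit sphere of Y
  have hsmax : ∀ y, y ∈ Y → ‖y‖ = 1 →
      ‖(Submodule.orthogonalProjectionOnto Xᗮ y : V)‖ ≤ ‖(Submodule.orthogonalProjectionOnto Xᗮ y₀ : V)‖ := by
    intro y hyY hyn
    have h1 := pyth X y hyn
    have h2 := pyth X y₀ hy₀n
    have h3 := hy₀min y hyY hyn
    nlinarith [norm_nonneg ((Submodule.orthogonalProjectionOnto Xᗮ y : V)),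
      norm_nonneg ((Submodule.orthogonalProjectionOnto Xᗮ y₀ : V)),
      norm_nonneg ((Submodule.orthogonalProjectionOnto X y : V)),
      norm_nonneg ((Submodule.orthogonalProjectionOnto X y₀ : V))]
  -- max property of u₀ for P_Y on unit sphere of Xᗮ
  have htmax : ∀ u, u ∈ Xᗮ → ‖u‖ = 1 →
      ‖(Submodule.orthogonalProjectionOnto Y u : V)‖ ≤ ‖(Submodule.orthogonalProjectionOnto Y u₀ : V)‖ := by
    intro u huX hun
    have h1 := pyth Y u hun
    have h2 := pyth Y u₀ hu₀n
    have h3 := hu₀min u huX hun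
    nlinarith [norm_nonneg ((Submodule.orthogonalProjectionOnto Y u : V)),
      norm_nonneg ((Submodule.orthogonalProjectionOnto Y u₀ : V)),
      norm_nonneg ((Submodule.orthogonalProjectionOnto Yᗮ u : V)),
      norm_nonneg ((Submodule.orthogonalProjectionOnto Yᗮ u₀ : V))]
  -- the two maxima are equal
  have hst : ‖(Submodule.orthogonalProjectionOnto Xᗮ y₀ : V)‖ = ‖(Submodule.orthogonalProjectionOnto Y u₀ : V)‖ := by
    apply le_antisymm
    · exact aux_le Xᗮ Y y₀ hy₀Y hy₀n _ (norm_nonneg _) (fun u hu hun => htmax u hu hun)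
    · exact aux_le Y Xᗮ u₀ hu₀X hu₀n _ (norm_nonneg _) (fun y hy hyn => hsmax y hy hyn)
  -- conclude
  congr 1
  have h1 := pyth X y₀ hy₀n
  have h2 := pyth Y u₀ hu₀n
  have hab : ‖(Submodule.orthogonalProjectionOnto X y₀ : V)‖ ^ 2
      = ‖(Submodule.orthogonalProjectionOnto Yᗮ u₀ : V)‖ ^ 2 := by
    rw [hst] at h1; linarith
  calc ‖(Submodule.orthogonalProjectionOnto X y₀ : V)‖
      = Real.sqrt (‖(Submodule.orthogonalProjectionOnto X y₀ : V)‖ ^ 2) :=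
        (Real.sqrt_sq (norm_nonneg _)).symm
    _ = Real.sqrt (‖(Submodule.orthogonalProjectionOnto Yᗮ u₀ : V)‖ ^ 2) := by rw [hab]
    _ = ‖(Submodule.orthogonalProjectionOnto Yᗮ u₀ : V)‖ := Real.sqrt_sq (norm_nonneg _)
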